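/- arXiv:1702.06553 — 2 statements merged into one kernel-verified Lean document; each statement's English description precedes it below -/
import Mathlib

section
/- Let l be a nonzero homogeneous linear form in ℂ[X,Y,Z,W] such that the quadratic forms X·Y and Z·l have no common non-unit factor (equivalently, l is not a scalar multiple of X and not a scalar multiple of Y). Then there exists λ ∈ ℂ such that the polynomial X·Y + λ·Z·l is irreducible in ℂ[X,Y,Z,W]. -/
open MvPolynomial

/-- A degree-one polynomial with coprime coefficients over a domain is irreducible. -/
lemma aux_linear_irred {R : Type*} [CommRing R] [IsDomain R] (A B : R) (hA : A ≠ 0)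
    (h : ∀ r : R, r ∣ A → r ∣ B → IsUnit r) :
    Irreducible (Polynomial.C A * Polynomial.X + Polynomial.C B) := by
  set p : Polynomial R := Polynomial.C A * Polynomial.X + Polynomial.C B with hp
  have hc1 : p.coeff 1 = A := by simp [hp]
  have hc0 : p.coeff 0 = B := by simp [hp]
  have hpd : p.natDegree = 1 := Polynomial.natDegree_linear hA
  have hp0 : p ≠ 0 := fun h0 => by simp [h0] at hc1; exact hA hc1.symm
  constructor
  · intro hu
    rcases Polynomial.isUnit_iff.mp hu with ⟨r, _, hr⟩
    have : p.coeff 1 = 0 := by rw [← hr]; simp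
    exact hA (hc1 ▸ this.symm ▸ rfl)
  · intro f g hfg
    have hf0 : f ≠ 0 := fun h0 => hp0 (by simp [hfg, h0])
    have hg0 : g ≠ 0 := fun h0 => hp0 (by simp [hfg, h0])
    have hdeg : f.natDegree + g.natDegree = 1 := by
      rw [← Polynomial.natDegree_mul hf0 hg0, ← hfg, hpd]
    rcases Nat.add_eq_one_iff.mp hdeg with ⟨hf, _⟩ | ⟨_, hg⟩
    · left
      have hfc : f = Polynomial.C (f.coeff 0) := Polynomial.eq_C_of_natDegree_eq_zero hf
      set c := f.coeff 0
      have h1 : A = c * g.coeff 1 := by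
        rw [← hc1, hfg, hfc, Polynomial.coeff_C_mul]
      have h0 : B = c * g.coeff 0 := by
        rw [← hc0, hfg, hfc, Polynomial.coeff_C_mul]
      have : IsUnit c := h c ⟨g.coeff 1, h1⟩ ⟨g.coeff 0, h0⟩
      rw [hfc]; exact this.map Polynomial.C
    · right
      have hgc : g = Polynomial.C (g.coeff 0) := Polynomial.eq_C_of_natDegree_eq_zero hg
      set c := g.coeff 0
      have h1 : A = c * f.coeff 1 := by
        rw [← hc1, hfg, hgc, mul_comm, Polynomial.coeff_C_mul]
      have h0 : B = c * f.coeff 0 := by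
        rw [← hc0, hfg, hgc, mul_comm, Polynomial.coeff_C_mul]
      have : IsUnit c := h c ⟨f.coeff 1, h1⟩ ⟨f.coeff 0, h0⟩
      rw [hgc]; exact this.map Polynomial.C


lemma aux_prime_X0 : Prime (X 0 : MvPolynomial (Fin 3) ℂ) := by
  have h : Prime ((MvPolynomial.finSuccEquiv ℂ 2).toMulEquiv (X 0)) := by
    show Prime (MvPolynomial.finSuccEquiv ℂ 2 (X 0))
    rw [finSuccEquiv_X_zero]
    exact Polynomial.prime_X
  exact (MulEquiv.prime_iff (MvPolynomial.finSuccEquiv ℂ 2).toMulEquiv).mp h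

lemma aux_deg_one (m : Fin 4 →₀ ℕ) (hm : m.degree = 1) :
    ∃ i : Fin 4, m = Finsupp.single i 1 := by
  have hsum : m 0 + m 1 + m 2 + m 3 = 1 := by
    have : ∑ i : Fin 4, m i = 1 := by
      rw [← hm, Finsupp.degree_apply]
      rw [Finset.sum_subset (Finset.subset_univ m.support)]
      intro x _ hx
      simpa using hx
    simpa [Fin.sum_univ_four] using this
  rcases (by omega :
      (m 0 = 1 ∧ m 1 = 0 ∧ m 2 = 0 ∧ m 3 = 0) ∨
      (m 0 = 0 ∧ m 1 = 1 ∧ m 2 = 0 ∧ m 3 = 0) ∨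
      (m 0 = 0 ∧ m 1 = 0 ∧ m 2 = 1 ∧ m 3 = 0) ∨
      (m 0 = 0 ∧ m 1 = 0 ∧ m 2 = 0 ∧ m 3 = 1)) with h | h | h | h
  · exact ⟨0, by ext j; fin_cases j <;> simp [Finsupp.single_apply, h.1, h.2.1, h.2.2.1, h.2.2.2]⟩
  · exact ⟨1, by ext j; fin_cases j <;> simp [Finsupp.single_apply, h.1, h.2.1, h.2.2.1, h.2.2.2]⟩
  · exact ⟨2, by ext j; fin_cases j <;> simp [Finsupp.single_apply, h.1, h.2.1, h.2.2.1, h.2.2.2]⟩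
  · exact ⟨3, by ext j; fin_cases j <;> simp [Finsupp.single_apply, h.1, h.2.1, h.2.2.1, h.2.2.2]⟩

lemma aux_repr (l : MvPolynomial (Fin 4) ℂ) (hlin : l.IsHomogeneous 1) :
    l = C (coeff (Finsupp.single 0 1) l) * X 0 + C (coeff (Finsupp.single 1 1) l) * X 1 +
        C (coeff (Finsupp.single 2 1) l) * X 2 + C (coeff (Finsupp.single 3 1) l) * X 3 := by
  ext m
  by_cases hd : m.degree = 1
  · obtain ⟨i, rfl⟩ := aux_deg_one m hd
    fin_cases i <;>
      simp [coeff_add, coeff_C_mul, coeff_X', Finsupp.single_eq_single_iff]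
  · have hml : coeff m l = 0 := hlin.coeff_eq_zero hd
    have : ∀ i : Fin 4, m ≠ Finsupp.single i 1 := by
      rintro i rfl
      exact hd (by simp [Finsupp.degree_apply, Finsupp.support_single_ne_zero _ one_ne_zero])
    simp [hml, coeff_add, coeff_C_mul, coeff_X', (this 0).symm ∘ Eq.symm,
      Ne.symm (this 0), Ne.symm (this 1), Ne.symm (this 2), Ne.symm (this 3)]


lemma aux_X_not_unit (i : Fin 4) : ¬ IsUnit (X i : MvPolynomial (Fin 4) ℂ) := by
  intro h
  have := h.map (constantCoeff (σ := Fin 4) (R := ℂ))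
  simp [constantCoeff_X] at this

lemma aux_fse_C (x : ℂ) :
    MvPolynomial.finSuccEquiv ℂ 3 (C x) = Polynomial.C (C x) := by
  simp [finSuccEquiv_apply]

/-- If `l` is a nonzero linear form in `ℂ[X,Y,Z,W]` such that `X·Y` and `Z·l` have no
common non-unit factor, then there exists `λ ∈ ℂ` with `X·Y + λ·Z·l` irreducible. -/
theorem stmt4 (l : MvPolynomial (Fin 4) ℂ) (hl : l ≠ 0) (hlin : l.IsHomogeneous 1)
    (hcop : ∀ r : MvPolynomial (Fin 4) ℂ, r ∣ X 0 * X 1 → r ∣ X 2 * l → IsUnit r) :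
    ∃ lam : ℂ, Irreducible (X 0 * X 1 + C lam * (X 2 * l)) := by
  set a := coeff (Finsupp.single 0 1) l with ha
  set b := coeff (Finsupp.single 1 1) l with hb
  set c := coeff (Finsupp.single 2 1) l with hc
  set d := coeff (Finsupp.single 3 1) l with hd
  have hrepr : l = C a * X 0 + C b * X 1 + C c * X 2 + C d * X 3 := aux_repr l hlin
  set lam : ℂ := if a * b = 0 then 1 else if c = a * b then 2 else 1 with hlamdef
  have hlam0 : lam ≠ 0 := by
    rw [hlamdef]; split_ifs <;> norm_num
  have hlamc : a ≠ 0 → b ≠ 0 → lam * a * b ≠ c := by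
    intro ha' hb'
    have hab : a * b ≠ 0 := mul_ne_zero ha' hb'
    rw [hlamdef, if_neg hab]
    by_cases hcc : c = a * b
    · rw [if_pos hcc]
      intro h
      exact hab (by linear_combination h + hcc)
    · rw [if_neg hcc, one_mul]
      exact fun h => hcc (h.symm)
  refine ⟨lam, ?_⟩
  -- the shear automorphism
  set μ := lam * a with hμ
  set fm : Fin 4 → MvPolynomial (Fin 4) ℂ := fun i => if i = 1 then X 1 - C μ * X 2 else X i with hfm
  set fp : Fin 4 → MvPolynomial (Fin 4) ℂ := fun i => if i = 1 then X 1 + C μ * X 2 else X i with hfp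
  have hcomp1 : (aeval fm).comp (aeval fp) = AlgHom.id ℂ (MvPolynomial (Fin 4) ℂ) := by
    apply MvPolynomial.algHom_ext
    intro i
    fin_cases i <;>
      simp [hfm, hfp, aeval_X, map_add, map_sub, map_mul, algebraMap_eq] <;> ring
  have hcomp2 : (aeval fp).comp (aeval fm) = AlgHom.id ℂ (MvPolynomial (Fin 4) ℂ) := by
    apply MvPolynomial.algHom_ext
    intro i
    fin_cases i <;>
      simp [hfm, hfp, aeval_X, map_add, map_sub, map_mul, algebraMap_eq] <;> ring
  set θ : MvPolynomial (Fin 4) ℂ ≃ₐ[ℂ] MvPolynomial (Fin 4) ℂ :=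
    AlgEquiv.ofAlgHom (aeval fm) (aeval fp) hcomp1 hcomp2 with hθ
  set e := θ.trans (MvPolynomial.finSuccEquiv ℂ 3) with he
  set c' := c - lam * a * b with hc'
  set A : MvPolynomial (Fin 3) ℂ := X 0 with hA
  set B : MvPolynomial (Fin 3) ℂ := C lam * (X 1 * (C b * X 0 + C c' * X 1 + C d * X 2)) with hB
  have hstep1 : θ (X 0 * X 1 + C lam * (X 2 * l)) =
      X 0 * X 1 + C lam * (X 2 * (C b * X 1 + C c' * X 2 + C d * X 3)) := by
    show aeval fm (X 0 * X 1 + C lam * (X 2 * l)) = _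
    conv_lhs => rw [hrepr]
    simp only [map_add, map_mul, aeval_X, aeval_C, algebraMap_eq, hfm]
    norm_num [Fin.ext_iff, show ((3:Fin 4) = 1) = False from by decide]
    rw [hc', hμ]
    simp only [map_sub, map_mul]
    ring
  have hstep2 : e (X 0 * X 1 + C lam * (X 2 * l)) = Polynomial.C A * Polynomial.X + Polynomial.C B := by
    rw [he, AlgEquiv.trans_apply, hstep1]
    have h1 : (1 : Fin 4) = Fin.succ 0 := rfl
    have h2 : (2 : Fin 4) = Fin.succ 1 := rfl
    have h3 : (3 : Fin 4) = Fin.succ 2 := rfl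
    rw [h1, h2, h3]
    simp only [map_add, map_mul, finSuccEquiv_X_zero, finSuccEquiv_X_succ,
      show ∀ x : ℂ, MvPolynomial.finSuccEquiv ℂ 3 (C x) = Polynomial.C (C x) from
        fun x => by simp [finSuccEquiv_apply], hA, hB]
    ring
  rw [← MulEquiv.irreducible_iff e, hstep2]
  apply aux_linear_irred A B (by rw [hA]; exact X_ne_zero 0)
  intro r hrA hrB
  by_contra hru
  -- r divides the prime X 0, so (as r is not a unit) X 0 divides r, hence X 0 ∣ B
  obtain ⟨t, ht⟩ := hrA
  have hXB : (X 0 : MvPolynomial (Fin 3) ℂ) ∣ B := by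
    rcases (aux_prime_X0.irreducible.isUnit_or_isUnit (hA ▸ ht)) with h | h
    · exact absurd h hru
    · obtain ⟨u, rfl⟩ := h
      have hXr : (X 0 : MvPolynomial (Fin 3) ℂ) ∣ r :=
        ⟨(↑u⁻¹ : MvPolynomial (Fin 3) ℂ), by
          rw [← hA, ht, mul_assoc, Units.mul_inv, mul_one]⟩
      exact hXr.trans hrB
  -- evaluation sending X 0 to 0
  set g : Fin 3 → MvPolynomial (Fin 3) ℂ := fun i => if i = 0 then 0 else X i with hg
  have hg0 : aeval g (X 0 : MvPolynomial (Fin 3) ℂ) = 0 := by simp [hg]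
  have hg1 : aeval g (X 1 : MvPolynomial (Fin 3) ℂ) = X 1 := by
    simp [hg, show ((1:Fin 3) = 0) = False from by decide]
  have hg2 : aeval g (X 2 : MvPolynomial (Fin 3) ℂ) = X 2 := by
    simp [hg, show ((2:Fin 3) = 0) = False from by decide]
  -- X 0 cannot divide C lam
  have hXlam : ¬ (X 0 : MvPolynomial (Fin 3) ℂ) ∣ C lam := by
    intro hdvd
    exact aux_prime_X0.not_unit
      (isUnit_of_dvd_unit hdvd ((isUnit_iff_ne_zero.mpr hlam0).map C))
  rw [hB] at hXB
  rcases aux_prime_X0.2.2 _ _ hXB with h | h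
  · exact hXlam h
  rcases aux_prime_X0.2.2 _ _ h with h' | h'
  · -- X 0 ∣ X 1 : impossible
    obtain ⟨s, hs⟩ := h'
    have := congrArg (aeval g) hs
    rw [hg1, map_mul, hg0, zero_mul] at this
    exact X_ne_zero 1 this
  · -- X 0 ∣ C b * X 0 + C c' * X 1 + C d * X 2
    obtain ⟨s, hs⟩ := h'
    have hv : (C c' * X 1 + C d * X 2 : MvPolynomial (Fin 3) ℂ) = 0 := by
      have h2 := congrArg (aeval g) hs
      simp only [map_add, map_mul, aeval_C, hg0, hg1, hg2, mul_zero, zero_mul,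
        add_zero, zero_add] at h2
      rw [← h2]
      simp [algebraMap_eq]
    have hcz : c' = 0 := by
      have := congrArg (coeff (Finsupp.single 1 1)) hv
      simpa [coeff_add, coeff_C_mul, coeff_X', Finsupp.single_eq_single_iff] using this
    have hdz : d = 0 := by
      have := congrArg (coeff (Finsupp.single 2 1)) hv
      simpa [coeff_add, coeff_C_mul, coeff_X', Finsupp.single_eq_single_iff] using this
    have hceq : c = lam * a * b := by
      have := hc' ▸ hcz
      linear_combination hcz + hc'.symm
    by_cases ha0 : a = 0
    · have hc0 : c = 0 := by rw [hceq, ha0]; ring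
      by_cases hb0 : b = 0
      · exact hl (by rw [hrepr, ha0, hb0, hc0, hdz]; simp)
      · -- l = C b * X 1
        have hlX : l = C b * X 1 := by rw [hrepr, ha0, hc0, hdz]; simp
        have h1 : (X 1 : MvPolynomial (Fin 4) ℂ) ∣ X 0 * X 1 := ⟨X 0, by ring⟩
        have h2 : (X 1 : MvPolynomial (Fin 4) ℂ) ∣ X 2 * l := ⟨X 2 * C b, by rw [hlX]; ring⟩
        exact aux_X_not_unit 1 (hcop _ h1 h2)
    · by_cases hb0 : b = 0
      · have hc0 : c = 0 := by rw [hceq, hb0]; ring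
        have hlX : l = C a * X 0 := by rw [hrepr, hb0, hc0, hdz]; simp
        have h1 : (X 0 : MvPolynomial (Fin 4) ℂ) ∣ X 0 * X 1 := ⟨X 1, rfl⟩
        have h2 : (X 0 : MvPolynomial (Fin 4) ℂ) ∣ X 2 * l := ⟨X 2 * C a, by rw [hlX]; ring⟩
        exact aux_X_not_unit 0 (hcop _ h1 h2)
      · exact hlamc ha0 hb0 (by rw [hμ]; linear_combination -hceq)
end

section
/- Let q₁ and q₂ be homogeneous polynomials of degree 2 in the polynomial ring ℂ[u,v] in two variables which have no common non-unit factor. Then there exist homogeneous polynomials u', v' of degree 1 in ℂ[u,v], linearly independent over ℂ, such that the ideal generated by q₁ and q₂ equals the ideal generated by u'·v' and (u' + v')². -/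
open MvPolynomial

noncomputable def Lf (p q : ℂ) : MvPolynomial (Fin 2) ℂ := C p * X 0 + C q * X 1

noncomputable def Qf (a b c : ℂ) : MvPolynomial (Fin 2) ℂ :=
  C a * X 0 ^ 2 + C b * (X 0 * X 1) + C c * X 1 ^ 2

lemma Lf_add (p q p' q' : ℂ) : Lf p q + Lf p' q' = Lf (p + p') (q + q') := by
  simp only [Lf, map_add]; ring

lemma Lf_smul (c p q : ℂ) : C c * Lf p q = Lf (c * p) (c * q) := by
  simp only [Lf, map_mul]; ring

lemma Lf_mul (p q p' q' : ℂ) :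
    Lf p q * Lf p' q' = Qf (p * p') (p * q' + p' * q) (q * q') := by
  simp only [Lf, Qf, map_mul, map_add]; ring

lemma Lf_sq (p q : ℂ) : (Lf p q) ^ 2 = Qf (p ^ 2) (2 * p * q) (q ^ 2) := by
  simp only [Lf, Qf, map_mul, map_pow, map_ofNat]; ring

lemma Qf_comb (s t a b c a' b' c' : ℂ) :
    C s * Qf a b c + C t * Qf a' b' c' =
      Qf (s * a + t * a') (s * b + t * b') (s * c + t * c') := by
  simp only [Qf, map_mul, map_add]; ring

lemma Lf_hom (p q : ℂ) : (Lf p q).IsHomogeneous 1 := by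
  apply IsHomogeneous.add <;>
    simpa using (isHomogeneous_C _ _).mul (isHomogeneous_X _ _)

lemma Lf_eq_zero {p q : ℂ} (h : Lf p q = 0) : p = 0 ∧ q = 0 := by
  have h1 := congrArg (eval ![1, 0]) h
  have h2 := congrArg (eval ![0, 1]) h
  simp [Lf] at h1 h2
  exact ⟨h1, h2⟩

lemma Lf_not_unit (p q : ℂ) : ¬ IsUnit (Lf p q) := by
  intro h
  have h0 : constantCoeff (Lf p q) = 0 := by simp [Lf]
  have := h.map constantCoeff
  rw [h0] at this
  exact not_isUnit_zero this

lemma Qf_not_unit (a b c : ℂ) : ¬ IsUnit (Qf a b c) := by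
  intro h
  have h0 : constantCoeff (Qf a b c) = 0 := by simp [Qf]
  have := h.map constantCoeff
  rw [h0] at this
  exact not_isUnit_zero this

lemma csqrt (z : ℂ) : ∃ w : ℂ, w ^ 2 = z := IsAlgClosed.exists_pow_nat_eq z zero_lt_two

lemma factor_sq {a b c : ℂ} (h : b ^ 2 = 4 * a * c) :
    ∃ p q : ℂ, a = p ^ 2 ∧ b = 2 * p * q ∧ c = q ^ 2 := by
  by_cases ha : a = 0
  · have hb : b = 0 := by
      have : b ^ 2 = 0 := by rw [h, ha]; ring
      exact pow_eq_zero_iff (by norm_num) |>.mp this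
    obtain ⟨q, hq⟩ := csqrt c
    exact ⟨0, q, by simp [ha], by simp [hb], hq.symm⟩
  · obtain ⟨p, hp⟩ := csqrt a
    have hpne : p ≠ 0 := by intro h0; exact ha (by rw [← hp, h0]; ring)
    refine ⟨p, b / (2 * p), hp.symm, by field_simp, ?_⟩
    field_simp
    linear_combination c * 4 * hp - h

lemma factor_quad (a b c : ℂ) :
    ∃ p₁ q₁ p₂ q₂ : ℂ, a = p₁ * p₂ ∧ b = p₁ * q₂ + p₂ * q₁ ∧ c = q₁ * q₂ := by
  by_cases ha : a = 0
  · exact ⟨0, 1, b, c, by rw [ha]; ring, by ring, by ring⟩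
  · obtain ⟨d, hd⟩ := csqrt (b ^ 2 - 4 * a * c)
    refine ⟨a, (b + d) / 2, 1, (b - d) / (2 * a), by ring, by field_simp; ring, ?_⟩
    field_simp
    linear_combination hd

lemma prop_of_cross {p q r s : ℂ} (h : p * s = r * q) (hz : ¬(p = 0 ∧ q = 0)) :
    ∃ l : ℂ, r = l * p ∧ s = l * q := by
  by_cases hp : p = 0
  · have hq : q ≠ 0 := fun h0 => hz ⟨hp, h0⟩
    have hr : r = 0 := by
      have : r * q = 0 := by rw [← h, hp]; ring
      exact (mul_eq_zero.mp this).resolve_right hq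
    exact ⟨s / q, by simp [hp, hr], by field_simp⟩
  · refine ⟨r / p, by field_simp, ?_⟩
    field_simp
    linear_combination h

lemma lin_indep_Lf {p q r s : ℂ} (h : p * s - r * q ≠ 0) :
    LinearIndependent ℂ ![Lf p q, Lf r s] := by
  rw [LinearIndependent.pair_iff]
  intro a b hab
  rw [smul_eq_C_mul, smul_eq_C_mul, Lf_smul, Lf_smul, Lf_add] at hab
  obtain ⟨h1, h2⟩ := Lf_eq_zero hab
  constructor
  · have : a * (p * s - r * q) = 0 := by linear_combination s * h1 - r * h2
    exact (mul_eq_zero.mp this).resolve_right h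
  · have : b * (p * s - r * q) = 0 := by linear_combination -(q * h1) + p * h2
    exact (mul_eq_zero.mp this).resolve_right h

lemma roots_exist (D1 E D2 : ℂ) (hδ : E ^ 2 - 4 * D1 * D2 ≠ 0) :
    ∃ s1 t1 s2 t2 : ℂ,
      D1 * s1 ^ 2 + E * s1 * t1 + D2 * t1 ^ 2 = 0 ∧
      D1 * s2 ^ 2 + E * s2 * t2 + D2 * t2 ^ 2 = 0 ∧
      s1 * t2 - s2 * t1 ≠ 0 := by
  obtain ⟨ε, hε⟩ := csqrt (E ^ 2 - 4 * D1 * D2)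
  have hεne : ε ≠ 0 := by intro h0; exact hδ (by rw [← hε, h0]; ring)
  by_cases hD : D1 = 0
  · refine ⟨1, 0, -D2, E, by linear_combination hD, by linear_combination D2 ^ 2 * hD, ?_⟩
    intro h0
    exact hδ (by linear_combination E * h0 - 4 * D2 * hD)
  · refine ⟨-E + ε, 2 * D1, -E - ε, 2 * D1,
      by linear_combination D1 * hε, by linear_combination D1 * hε, ?_⟩
    intro h0
    have h4 : (4 * D1) * ε = 0 := by linear_combination h0
    rcases mul_eq_zero.mp h4 with h' | h'
    · exact hD (by linear_combination h' / 4)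
    · exact hεne h'

lemma kill (q₁ q₂ F G : MvPolynomial (Fin 2) ℂ) (p u r s : ℂ)
    (hcop : ∀ rr : MvPolynomial (Fin 2) ℂ, rr ∣ q₁ → rr ∣ q₂ → IsUnit rr)
    (h1 : q₁ = Lf p u * F) (h2 : q₂ = Lf r s * G)
    (hx : p * s = r * u) (hq1 : q₁ ≠ 0) : False := by
  by_cases hz : p = 0 ∧ u = 0
  · exact hq1 (by rw [h1, hz.1, hz.2, show Lf (0:ℂ) 0 = 0 from by simp [Lf], zero_mul])
  · obtain ⟨l, hr, hs⟩ := prop_of_cross hx hz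
    have hdvd1 : Lf p u ∣ q₁ := ⟨F, h1⟩
    have hdvd2 : Lf p u ∣ q₂ := ⟨C l * G, by rw [h2, hr, hs, ← Lf_smul]; ring⟩
    exact Lf_not_unit p u (hcop _ hdvd1 hdvd2)

lemma fin2_ext {m n : Fin 2 →₀ ℕ} (h0 : m 0 = n 0) (h1 : m 1 = n 1) : m = n := by
  ext i; fin_cases i <;> assumption

lemma rep2 {f : MvPolynomial (Fin 2) ℂ} (hf : f.IsHomogeneous 2) :
    ∃ a b c, f = Qf a b c := by
  classical
  refine ⟨coeff (Finsupp.single 0 2) f,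
    coeff (Finsupp.single 0 1 + Finsupp.single 1 1) f,
    coeff (Finsupp.single 1 2) f, ?_⟩
  have hQ : ∀ a b c : ℂ, Qf a b c =
      monomial (Finsupp.single 0 2) a + monomial (Finsupp.single 0 1 + Finsupp.single 1 1) b +
        monomial (Finsupp.single 1 2) c := by
    intro a b c
    simp only [Qf, X_pow_eq_monomial, X, monomial_mul, C_mul_monomial, one_mul, mul_one,
      monomial_pow, one_pow, Finsupp.smul_single, smul_eq_mul, mul_one]
  have hdeg : ∀ m : Fin 2 →₀ ℕ, m.degree = m 0 + m 1 := by
    intro m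
    rw [Finsupp.degree_apply, Finset.sum_subset (Finset.subset_univ m.support)
      (by intro i _ hi; simpa using Finsupp.notMem_support_iff.mp hi)]
    exact Fin.sum_univ_two m
  apply MvPolynomial.ext
  intro m
  rw [hQ, coeff_add, coeff_add, coeff_monomial, coeff_monomial, coeff_monomial]
  by_cases hd : m 0 + m 1 = 2
  · rcases (by omega : m 0 = 2 ∧ m 1 = 0 ∨ m 0 = 1 ∧ m 1 = 1 ∨ m 0 = 0 ∧ m 1 = 2) with
      ⟨h0, h1⟩ | ⟨h0, h1⟩ | ⟨h0, h1⟩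
    · have hm' : m = Finsupp.single 0 2 :=
        fin2_ext (by simp [h0, Finsupp.single_apply]) (by simp [h1, Finsupp.single_apply])
      subst hm'
      simp [Finsupp.ext_iff, Fin.forall_fin_two, Finsupp.single_apply]
    · have hm' : m = Finsupp.single 0 1 + Finsupp.single 1 1 :=
        fin2_ext (by simp [h0, Finsupp.single_apply]) (by simp [h1, Finsupp.single_apply])
      subst hm'
      simp [Finsupp.ext_iff, Fin.forall_fin_two, Finsupp.single_apply]
    · have hm' : m = Finsupp.single 1 2 :=
        fin2_ext (by simp [h0, Finsupp.single_apply]) (by simp [h1, Finsupp.single_apply])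
      subst hm'
      simp [Finsupp.ext_iff, Fin.forall_fin_two, Finsupp.single_apply]
  · rw [if_neg (fun h => hd (by rw [← h]; simp [Finsupp.single_apply])),
      if_neg (fun h => hd (by rw [← h]; simp [Finsupp.single_apply])),
      if_neg (fun h => hd (by rw [← h]; simp [Finsupp.single_apply])),
      hf.coeff_eq_zero (show m.degree ≠ 2 by rw [hdeg m]; exact hd)]
    norm_num

lemma Lf_sub (p q p' q' : ℂ) : Lf p q - Lf p' q' = Lf (p - p') (q - q') := by
  simp only [Lf, map_sub]; ring

lemma C_four : (C (4:ℂ) : MvPolynomial (Fin 2) ℂ) = 4 :=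
  map_ofNat (C : ℂ →+* MvPolynomial (Fin 2) ℂ) 4

lemma hc4 (z : ℂ) : (4 : MvPolynomial (Fin 2) ℂ) * C (z / 4) = C z := by
  rw [← C_four, ← map_mul, show (4:ℂ) * (z / 4) = z by ring]

lemma four_ne : (4 : MvPolynomial (Fin 2) ℂ) ≠ 0 := by
  rw [← C_four]; simp

/-- Any two coprime binary quadratic forms `q₁, q₂ ∈ ℂ[u,v]` generate the same ideal as
`u'·v'` and `(u' + v')²` for some linearly independent linear forms `u', v'`. -/
theorem stmt6 (q₁ q₂ : MvPolynomial (Fin 2) ℂ)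
    (h₁ : q₁.IsHomogeneous 2) (h₂ : q₂.IsHomogeneous 2)
    (hcop : ∀ r : MvPolynomial (Fin 2) ℂ, r ∣ q₁ → r ∣ q₂ → IsUnit r) :
    ∃ u' v' : MvPolynomial (Fin 2) ℂ, u'.IsHomogeneous 1 ∧ v'.IsHomogeneous 1 ∧
      LinearIndependent ℂ ![u', v'] ∧
      Ideal.span ({q₁, q₂} : Set (MvPolynomial (Fin 2) ℂ)) =
        Ideal.span ({u' * v', (u' + v') ^ 2} : Set (MvPolynomial (Fin 2) ℂ)) := by
  obtain ⟨a₁, b₁, c₁, hq₁⟩ := rep2 h₁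
  obtain ⟨a₂, b₂, c₂, hq₂⟩ := rep2 h₂
  have hnu1 : ¬ IsUnit q₁ := hq₁ ▸ Qf_not_unit a₁ b₁ c₁
  have hnu2 : ¬ IsUnit q₂ := hq₂ ▸ Qf_not_unit a₂ b₂ c₂
  have hq1ne : q₁ ≠ 0 := by
    intro h0
    exact hnu2 (hcop q₂ (by rw [h0]; exact dvd_zero q₂) dvd_rfl)
  -- linear independence of q₁, q₂ over ℂ
  have hlin : ∀ s t : ℂ, C s * q₁ + C t * q₂ = 0 → s = 0 ∧ t = 0 := by
    intro s t h
    constructor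
    · by_contra hs
      have hd : q₂ ∣ q₁ := by
        refine ⟨C (-t / s), ?_⟩
        apply mul_left_cancel₀ (show (C s : MvPolynomial (Fin 2) ℂ) ≠ 0 by simpa using hs)
        have hst : s * (-t / s) = -t := by field_simp
        calc C s * q₁ = -(C t * q₂) := eq_neg_of_add_eq_zero_left h
          _ = C s * (q₂ * C (-t / s)) := by
              rw [show C s * (q₂ * C (-t / s)) = C (s * (-t / s)) * q₂ by
                rw [map_mul]; ring, hst, map_neg]; ring
      exact hnu2 (hcop q₂ hd dvd_rfl)
    · by_contra ht
      have hd : q₁ ∣ q₂ := by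
        refine ⟨C (-s / t), ?_⟩
        apply mul_left_cancel₀ (show (C t : MvPolynomial (Fin 2) ℂ) ≠ 0 by simpa using ht)
        have hst : t * (-s / t) = -s := by field_simp
        calc C t * q₂ = -(C s * q₁) := eq_neg_of_add_eq_zero_left (by linear_combination h)
          _ = C t * (q₁ * C (-s / t)) := by
              rw [show C t * (q₁ * C (-s / t)) = C (t * (-s / t)) * q₁ by
                rw [map_mul]; ring, hst, map_neg]; ring
      exact hnu1 (hcop q₁ dvd_rfl hd)
  -- the resultant is nonzero
  have hR : (a₁ * c₂ - a₂ * c₁) ^ 2 - (a₁ * b₂ - a₂ * b₁) * (b₁ * c₂ - b₂ * c₁) ≠ 0 := by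
    intro h0
    obtain ⟨p1, u1, p2, u2, e1, e2, e3⟩ := factor_quad a₁ b₁ c₁
    obtain ⟨r1, s1, r2, s2, f1, f2, f3⟩ := factor_quad a₂ b₂ c₂
    have hfac1 : q₁ = Lf p1 u1 * Lf p2 u2 := by
      rw [hq₁, Lf_mul, ← e1, ← e2, ← e3]
    have hfac1' : q₁ = Lf p2 u2 * Lf p1 u1 := by rw [hfac1]; ring
    have hfac2 : q₂ = Lf r1 s1 * Lf r2 s2 := by
      rw [hq₂, Lf_mul, ← f1, ← f2, ← f3]
    have hfac2' : q₂ = Lf r2 s2 * Lf r1 s1 := by rw [hfac2]; ring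
    have hprod : (p1 * s1 - r1 * u1) * ((p1 * s2 - r2 * u1) *
        ((p2 * s1 - r1 * u2) * (p2 * s2 - r2 * u2))) = 0 := by
      rw [e1, e2, e3, f1, f2, f3] at h0
      linear_combination h0
    rcases mul_eq_zero.mp hprod with h | h
    · exact kill q₁ q₂ _ _ p1 u1 r1 s1 hcop hfac1 hfac2 (by linear_combination h) hq1ne
    rcases mul_eq_zero.mp h with h | h
    · exact kill q₁ q₂ _ _ p1 u1 r2 s2 hcop hfac1 hfac2' (by linear_combination h) hq1ne
    rcases mul_eq_zero.mp h with h | h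
    · exact kill q₁ q₂ _ _ p2 u2 r1 s1 hcop hfac1' hfac2 (by linear_combination h) hq1ne
    · exact kill q₁ q₂ _ _ p2 u2 r2 s2 hcop hfac1' hfac2' (by linear_combination h) hq1ne
  -- two distinct square members of the pencil
  obtain ⟨s1, t1, s2, t2, hr1, hr2, hdet⟩ :=
    roots_exist (b₁ ^ 2 - 4 * a₁ * c₁) (2 * b₁ * b₂ - 4 * a₁ * c₂ - 4 * a₂ * c₁)
      (b₂ ^ 2 - 4 * a₂ * c₂)
      (fun h0 => hR (by linear_combination h0 / 16))
  have hdisc1 : (s1 * b₁ + t1 * b₂) ^ 2 = 4 * (s1 * a₁ + t1 * a₂) * (s1 * c₁ + t1 * c₂) := by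
    linear_combination hr1
  have hdisc2 : (s2 * b₁ + t2 * b₂) ^ 2 = 4 * (s2 * a₁ + t2 * a₂) * (s2 * c₁ + t2 * c₂) := by
    linear_combination hr2
  obtain ⟨σ1, τ1, g1a, g1b, g1c⟩ := factor_sq hdisc1
  obtain ⟨σ2, τ2, g2a, g2b, g2c⟩ := factor_sq hdisc2
  have hx1 : C s1 * q₁ + C t1 * q₂ = (Lf σ1 τ1) ^ 2 := by
    rw [hq₁, hq₂, Qf_comb, g1a, g1b, g1c, Lf_sq]
  have hx2 : C s2 * q₁ + C t2 * q₂ = (Lf σ2 τ2) ^ 2 := by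
    rw [hq₁, hq₂, Qf_comb, g2a, g2b, g2c, Lf_sq]
  have hcross : σ1 * τ2 - σ2 * τ1 ≠ 0 := by
    intro hc
    by_cases hz : σ1 = 0 ∧ τ1 = 0
    · have h0 : C s1 * q₁ + C t1 * q₂ = 0 := by
        rw [hx1, hz.1, hz.2, show Lf (0:ℂ) 0 = 0 from by simp [Lf]]; ring
      obtain ⟨hs0, ht0⟩ := hlin s1 t1 h0
      exact hdet (by rw [hs0, ht0]; ring)
    · obtain ⟨l, hσ, hτ⟩ := prop_of_cross (p := σ1) (q := τ1) (r := σ2) (s := τ2) (by linear_combination hc) hz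
      have hL : Lf σ2 τ2 = C l * Lf σ1 τ1 := by rw [Lf_smul, ← hσ, ← hτ]
      have h22 : C s2 * q₁ + C t2 * q₂ = C l ^ 2 * (C s1 * q₁ + C t1 * q₂) := by
        rw [hx2, hx1, hL, mul_pow]
      have h0 : C (s2 - l ^ 2 * s1) * q₁ + C (t2 - l ^ 2 * t1) * q₂ = 0 := by
        simp only [map_sub, map_mul, map_pow]
        linear_combination h22
      obtain ⟨e1, e2⟩ := hlin _ _ h0
      exact hdet (by linear_combination s1 * e2 - t1 * e1)
  -- the linear forms
  refine ⟨Lf ((σ1 + σ2) / 2) ((τ1 + τ2) / 2), Lf ((σ1 - σ2) / 2) ((τ1 - τ2) / 2),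
    Lf_hom _ _, Lf_hom _ _, lin_indep_Lf ?_, ?_⟩
  · intro h0
    exact hcross (by linear_combination -2 * h0)
  set u' := Lf ((σ1 + σ2) / 2) ((τ1 + τ2) / 2) with hu'
  set v' := Lf ((σ1 - σ2) / 2) ((τ1 - τ2) / 2) with hv'
  have hsum : u' + v' = Lf σ1 τ1 := by
    rw [hu', hv', Lf_add]; congr 1 <;> ring
  have hdiff : u' - v' = Lf σ2 τ2 := by
    rw [hu', hv', Lf_sub]; congr 1 <;> ring
  have e1 : (u' + v') ^ 2 = C s1 * q₁ + C t1 * q₂ := by rw [hsum]; exact hx1.symm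
  have h4 : (4 : MvPolynomial (Fin 2) ℂ) * (u' * v') = (Lf σ1 τ1) ^ 2 - (Lf σ2 τ2) ^ 2 := by
    linear_combination (Lf σ1 τ1 + u' + v') * hsum - (Lf σ2 τ2 + u' - v') * hdiff
  have e2 : (4 : MvPolynomial (Fin 2) ℂ) * (u' * v') =
      (C s1 - C s2) * q₁ + (C t1 - C t2) * q₂ := by
    linear_combination h4 - hx1 + hx2
  have hA1 : t2 / (s1 * t2 - s2 * t1) * s1 + -t1 / (s1 * t2 - s2 * t1) * s2 = 1 := by
    rw [div_mul_eq_mul_div, div_mul_eq_mul_div, ← add_div, div_eq_one_iff_eq hdet]; ring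
  have hB1 : t2 / (s1 * t2 - s2 * t1) * t1 + -t1 / (s1 * t2 - s2 * t1) * t2 = 0 := by
    field_simp; ring
  have hA2 : -s2 / (s1 * t2 - s2 * t1) * s1 + s1 / (s1 * t2 - s2 * t1) * s2 = 0 := by
    field_simp; ring
  have hB2 : -s2 / (s1 * t2 - s2 * t1) * t1 + s1 / (s1 * t2 - s2 * t1) * t2 = 1 := by
    rw [div_mul_eq_mul_div, div_mul_eq_mul_div, ← add_div, div_eq_one_iff_eq hdet]; ring
  set α1 := t2 / (s1 * t2 - s2 * t1)
  set β1 := -t1 / (s1 * t2 - s2 * t1)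
  set α2 := -s2 / (s1 * t2 - s2 * t1)
  set β2 := s1 / (s1 * t2 - s2 * t1)
  have hCA1 : (C α1 : MvPolynomial (Fin 2) ℂ) * C s1 + C β1 * C s2 = 1 := by
    rw [← map_mul, ← map_mul, ← map_add, hA1, map_one]
  have hCB1 : (C α1 : MvPolynomial (Fin 2) ℂ) * C t1 + C β1 * C t2 = 0 := by
    rw [← map_mul, ← map_mul, ← map_add, hB1, map_zero]
  have hCA2 : (C α2 : MvPolynomial (Fin 2) ℂ) * C s1 + C β2 * C s2 = 0 := by
    rw [← map_mul, ← map_mul, ← map_add, hA2, map_zero]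
  have hCB2 : (C α2 : MvPolynomial (Fin 2) ℂ) * C t1 + C β2 * C t2 = 1 := by
    rw [← map_mul, ← map_mul, ← map_add, hB2, map_one]
  refine le_antisymm (Ideal.span_le.mpr ?_) (Ideal.span_le.mpr ?_)
  · intro z hz
    simp only [Set.mem_insert_iff, Set.mem_singleton_iff] at hz
    rcases hz with rfl | rfl
    · refine SetLike.mem_coe.mpr (Ideal.mem_span_pair.mpr
        ⟨-(4 * C β1), C α1 + C β1, ?_⟩)
      linear_combination (-(C β1)) * e2 + (C α1 + C β1) * e1 + z * hCA1 + q₂ * hCB1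
    · refine SetLike.mem_coe.mpr (Ideal.mem_span_pair.mpr
        ⟨-(4 * C β2), C α2 + C β2, ?_⟩)
      linear_combination (-(C β2)) * e2 + (C α2 + C β2) * e1 + q₁ * hCA2 + z * hCB2
  · intro z hz
    simp only [Set.mem_insert_iff, Set.mem_singleton_iff] at hz
    rcases hz with rfl | rfl
    · refine SetLike.mem_coe.mpr (Ideal.mem_span_pair.mpr
        ⟨C (s1 / 4) - C (s2 / 4), C (t1 / 4) - C (t2 / 4), ?_⟩)
      apply mul_left_cancel₀ four_ne
      linear_combination -e2 + q₁ * hc4 s1 - q₁ * hc4 s2 + q₂ * hc4 t1 - q₂ * hc4 t2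
    · exact SetLike.mem_coe.mpr (Ideal.mem_span_pair.mpr ⟨C s1, C t1, e1.symm⟩)
end
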